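/- The function l(a,b) = (1/4)((a-1)^2 + (b-1)^2) + (1/2)|ab| on ℝ² attains its minimum value 1/4, and this minimum is attained exactly at the points with a ≥ 0, b ≥ 0, and a + b = 1. -/
import Mathlib


noncomputable def l : ℝ × ℝ → ℝ :=
  fun p => ((p.1 - 1) ^ 2 + (p.2 - 1) ^ 2) / 4 + |p.1 * p.2| / 2

theorem stmt_0 :
    (∀ a b : ℝ, 1 / 4 ≤ l (a, b)) ∧
    (∀ a b : ℝ, l (a, b) = 1 / 4 ↔ 0 ≤ a ∧ 0 ≤ b ∧ a + b = 1) := by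
  have key : ∀ a b : ℝ, 1 / 4 ≤ l (a, b) ∧
      (l (a, b) = 1 / 4 ↔ 0 ≤ a ∧ 0 ≤ b ∧ a + b = 1) := by
    intro a b
    simp only [l]
    rcases le_or_gt 0 (a * b) with h | h
    · rw [abs_of_nonneg h]
      refine ⟨by nlinarith [sq_nonneg (a + b - 1)], ?_, ?_⟩
      · intro he
        have hs : a + b = 1 := by nlinarith [sq_nonneg (a + b - 1)]
        refine ⟨?_, ?_, hs⟩
        · by_contra hc
          push_neg at hc
          nlinarith [sq_nonneg a]
        · by_contra hc
          push_neg at hc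
          nlinarith [sq_nonneg b]
      · rintro ⟨ha, hb, hs⟩
        nlinarith
    · rw [abs_of_neg h]
      have hstrict : 1 / 4 < ((a - 1) ^ 2 + (b - 1) ^ 2) / 4 + -(a * b) / 2 := by
        nlinarith [sq_nonneg (a + b - 1)]
      refine ⟨le_of_lt hstrict, ?_, ?_⟩
      · intro he; linarith
      · rintro ⟨ha, hb, _⟩
        nlinarith [mul_nonneg ha hb]
  exact ⟨fun a b => (key a b).1, fun a b => (key a b).2⟩
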